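/- Let w be an alternating 2-form on ℝ⁷ lying in Λ²₁₄, i.e. Σ_{1≤i<j≤7} w(eᵢ,eⱼ)·φ₀(X,eᵢ,eⱼ) = 0 for every X ∈ ℝ⁷. Then Σ_{i=1}^{7} eᵢ⌟(A_{eᵢ⋆}w) = 0; explicitly, for every Z ∈ ℝ⁷: Σ_{i=1}^{7} w(eᵢ, A(eᵢ, Z)) = 0. -/
import Mathlib


open scoped RealInnerProductSpace

noncomputable section

/-- `ℝ⁷` with its standard inner product. -/
abbrev V7 := EuclideanSpace ℝ (Fin 7)

/-- The standard orthonormal basis vectors of `ℝ⁷`. -/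
def E (i : Fin 7) : V7 := EuclideanSpace.single i 1

/-- `(eⁱ ∧ eʲ ∧ eᵏ)(X,Y,Z)` : the 3×3 determinant of coordinates `i,j,k` of `X,Y,Z`. -/
def triple (i j k : Fin 7) (X Y Z : V7) : ℝ :=
  X i * (Y j * Z k - Y k * Z j) - X j * (Y i * Z k - Y k * Z i) + X k * (Y i * Z j - Y j * Z i)

/-- `(eⁱ ∧ eʲ ∧ eᵏ ∧ eˡ)(X,Y,Z,W)` : the 4×4 determinant of coordinates `i,j,k,l`. -/
def quadruple (i j k l : Fin 7) (X Y Z W : V7) : ℝ :=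
  X i * triple j k l Y Z W - X j * triple i k l Y Z W
    + X k * triple i j l Y Z W - X l * triple i j k Y Z W

/-- The associative 3-form
`φ₀ = e¹²³ + e¹⁷⁶ + e²⁵⁷ + e⁶⁵³ + e¹⁴⁵ + e²⁴⁶ + e³⁴⁷` (indices shifted to `0,…,6`). -/
def phi (X Y Z : V7) : ℝ :=
  triple 0 1 2 X Y Z + triple 0 6 5 X Y Z + triple 1 4 6 X Y Z + triple 5 4 2 X Y Z
    + triple 0 3 4 X Y Z + triple 1 3 5 X Y Z + triple 2 3 6 X Y Z

/-- The coassociative 4-form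
`ψ₀ = e⁴⁵⁶⁷ − e²³⁴⁵ + e¹³⁴⁶ − e¹²⁴⁷ + e²³⁶⁷ + e¹³⁵⁷ + e¹²⁵⁶` (indices shifted to `0,…,6`). -/
def psi (X Y Z W : V7) : ℝ :=
  quadruple 3 4 5 6 X Y Z W - quadruple 1 2 3 4 X Y Z W + quadruple 0 2 3 5 X Y Z W
    - quadruple 0 1 3 6 X Y Z W + quadruple 1 2 5 6 X Y Z W + quadruple 0 2 4 6 X Y Z W
    + quadruple 0 1 4 5 X Y Z W

/-- The cross product `A(Y,Z)`, characterized by `⟨X, A(Y,Z)⟩ = φ₀(X,Y,Z)`. -/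
def cross (Y Z : V7) : V7 := ∑ i, phi (E i) Y Z • E i

/-- The tangent-valued 3-form `χ`, characterized by `(1/2)⟨X, χ(Y,Z,W)⟩ = ψ₀(X,Y,Z,W)`. -/
def chi (Y Z W : V7) : V7 := ∑ i, (2 * psi (E i) Y Z W) • E i

lemma phi_cyc (X Y Z : V7) : phi X Y Z = phi Z X Y := by unfold phi triple; ring
lemma phi_swap23 (X Y Z : V7) : phi X Z Y = -phi X Y Z := by unfold phi triple; ring
lemma phi_self (X Z : V7) : phi X X Z = 0 := by unfold phi triple; ring

lemma sum_skew (g : Fin 7 → Fin 7 → ℝ) (h : ∀ i j, g i j + g j i = 0) :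
    ∑ i, ∑ j, g i j = 0 := by
  have hc : ∑ i, ∑ j, g j i = ∑ i, ∑ j, g i j := Finset.sum_comm
  have e : ∑ i : Fin 7, ∑ j : Fin 7, (g i j + g j i) = 0 := by simp [h]
  have e2 : ∑ i : Fin 7, ∑ j : Fin 7, (g i j + g j i)
      = (∑ i, ∑ j, g i j) + (∑ i, ∑ j, g j i) := by
    simp [Finset.sum_add_distrib]
  linarith


/-- For `w ∈ Λ²₁₄`, `Σᵢ eᵢ⌟(A_{eᵢ⋆}w) = 0`: for every `Z`, `Σᵢ w(eᵢ, A(eᵢ,Z)) = 0`. -/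
theorem stmt9 (w : AlternatingMap ℝ V7 ℝ (Fin 2))
    (h14 : ∀ X : V7, ∑ i : Fin 7, ∑ j : Fin 7,
      (if i < j then w ![E i, E j] * phi X (E i) (E j) else 0) = 0) :
    ∀ Z : V7, ∑ i : Fin 7, w ![E i, cross (E i) Z] = 0 := by
  intro Z
  -- w swap and self
  have hwswap : ∀ x y : V7, w ![y, x] = -w ![x, y] := by
    intro x y
    have h1 : ![y, x] = ![x, y] ∘ Equiv.swap (0 : Fin 2) 1 := by
      funext k; fin_cases k <;> simp
    rw [h1, AlternatingMap.map_swap w _ (by decide : (0:Fin 2) ≠ 1)]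
  have hwself : ∀ x : V7, w ![x, x] = 0 := by
    intro x
    exact w.map_eq_zero_of_eq ![x, x] (by simp) (by decide : (0:Fin 2) ≠ 1)
  -- linearity in second slot
  have hlin : ∀ (x : V7) (c : Fin 7 → ℝ),
      w ![x, ∑ j, c j • E j] = ∑ j, c j * w ![x, E j] := by
    intro x c
    have h1 : ∀ z : V7, ![x, z] = Function.update ![x, x] 1 z := by
      intro z; funext k; fin_cases k <;> simp
    rw [h1]
    have h2 : w (Function.update ![x, x] 1 (∑ j, c j • E j))
        = w.toMultilinearMap (Function.update ![x, x] 1 (∑ j, c j • E j)) := rfl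
    rw [h2, MultilinearMap.map_update_sum]
    refine Finset.sum_congr rfl fun j _ => ?_
    rw [MultilinearMap.map_update_smul]
    rw [show w.toMultilinearMap (Function.update ![x, x] 1 (E j)) = w ![x, E j] by
      rw [← h1 (E j)]; rfl]
    simp
  -- expand cross
  have hexp : ∀ i : Fin 7, w ![E i, cross (E i) Z]
      = ∑ j, phi (E j) (E i) Z * w ![E i, E j] := by
    intro i
    rw [show cross (E i) Z = ∑ j, phi (E j) (E i) Z • E j from rfl, hlin]
  simp_rw [hexp]
  -- skew-symmetrize
  have key : ∑ i : Fin 7, ∑ j : Fin 7,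
      (phi (E j) (E i) Z * w ![E i, E j]
        + 2 * (if i < j then w ![E i, E j] * phi Z (E i) (E j) else 0)) = 0 := by
    apply sum_skew
    intro i j
    rcases lt_trichotomy i j with hij | hij | hij
    · rw [if_pos hij, if_neg (not_lt.2 hij.le)]
      rw [hwswap (E i) (E j), phi_cyc (E j) (E i) Z, phi_cyc (E i) (E j) Z,
        phi_swap23 Z (E j) (E i)]
      ring
    · subst hij
      simp [hwself, phi_self, phi_cyc (E i) (E i) Z]
    · rw [if_neg (not_lt.2 hij.le), if_pos hij]
      rw [hwswap (E j) (E i), phi_cyc (E j) (E i) Z, phi_cyc (E i) (E j) Z,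
        phi_swap23 Z (E j) (E i)]
      ring
  have h0 := h14 Z
  have hsplit : ∑ i : Fin 7, ∑ j : Fin 7,
      (phi (E j) (E i) Z * w ![E i, E j]
        + 2 * (if i < j then w ![E i, E j] * phi Z (E i) (E j) else 0))
      = (∑ i : Fin 7, ∑ j : Fin 7, phi (E j) (E i) Z * w ![E i, E j])
        + 2 * (∑ i : Fin 7, ∑ j : Fin 7,
            (if i < j then w ![E i, E j] * phi Z (E i) (E j) else 0)) := by
    rw [Finset.mul_sum]
    rw [← Finset.sum_add_distrib]
    refine Finset.sum_congr rfl fun i _ => ?_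
    rw [Finset.mul_sum, ← Finset.sum_add_distrib]
  rw [hsplit, h0] at key
  linarith
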